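/- Let g_V : [0,∞)^d → [0,∞) be continuous and positively 1-homogeneous with g_V(x) ≥ max_j x_j for all x, let γ ∈ (0,1], and define g_X(x) = min_{s ∈ [0, min(x)/γ]} { s + g_V(x − γ s 1) } for x ∈ [0,∞)^d, where 1 = (1,…,1). Let m_V = min_{y : min_j y_j = 1} g_V(y). Then min over {x : min_j x_j = 1} of g_X equals m_V if γ < 1/m_V, and equals 1/γ if γ ≥ 1/m_V. Equivalently, writing η^V = 1/m_V and η^X = [min_{x : min(x)=1} g_X(x)]^{−1}, one has η^X = η^V if γ < η^V and η^X = γ if η^V ≤ γ ≤ 1. -/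

import Mathlib

open Filter Topology

/-- residual tail dependence of the Huser–Wadsworth mixture, Section 4.3 of
the paper: for a gauge function `g_V ≥ max` and `γ ∈ (0,1]`, with
`g_X(x) = min_{s ∈ [0, min(x)/γ]} {s + g_V(x - γs𝟙)}` and
`m_V = min_{y : min_j y_j = 1} g_V(y)`, the minimum of `g_X` over `{x : min_j x_j = 1}`
equals `m_V` if `γ < 1/m_V` and equals `1/γ` if `γ ≥ 1/m_V`; equivalently, with
`η^V = 1/m_V` and `η^X` the reciprocal of that minimum, `η^X = η^V` if `γ < η^V` and
`η^X = γ` if `η^V ≤ γ ≤ 1`. -/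
theorem eta_of_mixture
    {d : ℕ} (hd : 0 < d)
    (gV : (Fin d → ℝ) → ℝ) (hgcont : Continuous gV)
    (hghomog : ∀ t : ℝ, 0 < t → ∀ x, gV (t • x) = t * gV x)
    (hgmax : ∀ x : Fin d → ℝ, (∀ j, 0 ≤ x j) → ∀ j, x j ≤ gV x)
    (γ : ℝ) (hγ0 : 0 < γ) (hγ1 : γ ≤ 1)
    (gX : (Fin d → ℝ) → ℝ)
    (hgX : ∀ x : Fin d → ℝ, (∀ j, 0 ≤ x j) →
      gX x = sInf ((fun s => s + gV (fun j => x j - γ * s)) ''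
        Set.Icc (0:ℝ) ((⨅ j, x j) / γ)))
    (mV mX : ℝ)
    (hmV : mV = sInf (gV '' {y : Fin d → ℝ | (∀ j, 0 ≤ y j) ∧ (⨅ j, y j) = 1}))
    (hmX : mX = sInf (gX '' {x : Fin d → ℝ | (∀ j, 0 ≤ x j) ∧ (⨅ j, x j) = 1})) :
    ((γ < 1 / mV → mX = mV) ∧ (1 / mV ≤ γ → mX = 1 / γ)) ∧
    ((γ < 1 / mV → mX⁻¹ = mV⁻¹) ∧ (1 / mV ≤ γ → mX⁻¹ = γ)) := by

  haveI : Nonempty (Fin d) := ⟨⟨0, hd⟩⟩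
  have hγne : γ ≠ 0 := ne_of_gt hγ0
  -- gV 0 = 0
  have hgV0 : gV 0 = 0 := by
    have h := hghomog 2 (by norm_num) 0
    rw [smul_zero] at h
    linarith
  -- the constant 1 vector is in the V-set
  have hone : (fun _ : Fin d => (1:ℝ)) ∈ {y : Fin d → ℝ | (∀ j, 0 ≤ y j) ∧ (⨅ j, y j) = 1} :=
    ⟨fun _ => zero_le_one, ciInf_const⟩
  have hV_lb : ∀ z ∈ gV '' {y : Fin d → ℝ | (∀ j, 0 ≤ y j) ∧ (⨅ j, y j) = 1}, (1:ℝ) ≤ z := by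
    rintro z ⟨y, ⟨hy0, hy1⟩, rfl⟩
    obtain ⟨j, hj⟩ := exists_eq_ciInf_of_finite (f := y)
    calc (1:ℝ) = y j := by rw [hj, hy1]
    _ ≤ gV y := hgmax y hy0 j
  have hSVne : (gV '' {y : Fin d → ℝ | (∀ j, 0 ≤ y j) ∧ (⨅ j, y j) = 1}).Nonempty :=
    ⟨_, Set.mem_image_of_mem gV hone⟩
  have hSVbdd : BddBelow (gV '' {y : Fin d → ℝ | (∀ j, 0 ≤ y j) ∧ (⨅ j, y j) = 1}) :=
    ⟨1, hV_lb⟩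
  have hmV1 : (1:ℝ) ≤ mV := hmV ▸ le_csInf hSVne hV_lb
  have hmVpos : (0:ℝ) < mV := lt_of_lt_of_le one_pos hmV1
  set M : ℝ := min mV (1/γ) with hM
  have hMmV : M ≤ mV := min_le_left _ _
  have hMγ : M ≤ 1/γ := min_le_right _ _
  -- inner lower bound
  have inner_lb : ∀ x : Fin d → ℝ, (∀ j, 0 ≤ x j) → (⨅ j, x j) = 1 →
      ∀ z ∈ ((fun s => s + gV (fun j => x j - γ * s)) '' Set.Icc (0:ℝ) ((⨅ j, x j) / γ)),
      M ≤ z := by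
    intro x hx0 hx1 z hz
    rw [hx1] at hz
    obtain ⟨s, ⟨hs0, hs1⟩, rfl⟩ := hz
    have hxge : ∀ j, (1:ℝ) ≤ x j := by
      intro j
      calc (1:ℝ) = ⨅ j, x j := hx1.symm
      _ ≤ x j := ciInf_le (Finite.bddBelow_range x) j
    have hγs1 : γ * s ≤ 1 := by
      have := mul_le_mul_of_nonneg_left hs1 hγ0.le
      rwa [mul_one_div, div_self hγne] at this
    rcases eq_or_lt_of_le hγs1 with heq | hlt
    · -- γ s = 1, so s = 1/γ
      have hs : s = 1/γ := by field_simp; linarith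
      have hv0 : ∀ j, 0 ≤ x j - γ * s := fun j => by
        have := hxge j; linarith [heq]
      have : (0:ℝ) ≤ gV (fun j => x j - γ * s) := by
        have h1 := hgmax (fun j => x j - γ * s) hv0 ⟨0, hd⟩
        have h2 := hv0 ⟨0, hd⟩
        linarith
      calc M ≤ 1/γ := hMγ
      _ = s := hs.symm
      _ ≤ s + gV (fun j => x j - γ * s) := by linarith
    · -- γ s < 1
      set t : ℝ := 1 - γ * s with ht
      have ht0 : 0 < t := by simp [ht]; linarith
      set w : Fin d → ℝ := fun j => (x j - γ * s) / t with hw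
      have hw0 : ∀ j, 0 ≤ w j := fun j => div_nonneg (by have := hxge j; linarith) ht0.le
      have hwge : ∀ j, (1:ℝ) ≤ w j := fun j =>
        (one_le_div ht0).2 (by have := hxge j; simp [ht]; linarith)
      obtain ⟨j0, hj0⟩ := exists_eq_ciInf_of_finite (f := x)
      have hxj0 : x j0 = 1 := by rw [hj0, hx1]
      have hwinf : (⨅ j, w j) = 1 := by
        refine le_antisymm ?_ (le_ciInf hwge)
        calc (⨅ j, w j) ≤ w j0 := ciInf_le (Finite.bddBelow_range w) j0
        _ = 1 := by simp [hw, hxj0, ht, div_self ht0.ne']; exact ht0.ne'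
      have hveq : (fun j => x j - γ * s) = t • w := by
        funext j
        simp [hw, smul_eq_mul, mul_div_cancel₀ _ ht0.ne']
      have hgVv : gV (fun j => x j - γ * s) = t * gV w := by
        rw [hveq, hghomog t ht0 w]
      have hmVle : mV ≤ gV w := by
        rw [hmV]
        exact csInf_le hSVbdd ⟨w, ⟨hw0, hwinf⟩, rfl⟩
      have hγM : γ * M ≤ 1 := by
        have := mul_le_mul_of_nonneg_left hMγ hγ0.le
        rwa [mul_one_div, div_self hγne] at this
      show M ≤ s + gV fun j => x j - γ * s
      rw [hgVv]
      nlinarith [mul_le_mul_of_nonneg_left hmVle ht0.le, mul_nonneg hs0 (by linarith : (0:ℝ) ≤ 1 - γ * M)]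
  -- gX lower bound on the set
  have key : ∀ x : Fin d → ℝ, (∀ j, 0 ≤ x j) → (⨅ j, x j) = 1 → M ≤ gX x := by
    intro x hx0 hx1
    rw [hgX x hx0]
    refine le_csInf ⟨0 + gV (fun j => x j - γ * 0), ⟨0, ⟨le_refl 0, by
      rw [hx1]; positivity⟩, rfl⟩⟩ (inner_lb x hx0 hx1)
  have hSXbdd : BddBelow (gX '' {x : Fin d → ℝ | (∀ j, 0 ≤ x j) ∧ (⨅ j, x j) = 1}) := by
    refine ⟨M, ?_⟩
    rintro z ⟨x, ⟨hx0, hx1⟩, rfl⟩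
    exact key x hx0 hx1
  have hSXne : (gX '' {x : Fin d → ℝ | (∀ j, 0 ≤ x j) ∧ (⨅ j, x j) = 1}).Nonempty :=
    ⟨_, Set.mem_image_of_mem gX hone⟩
  have hmXgeM : M ≤ mX := by
    rw [hmX]
    refine le_csInf hSXne ?_
    rintro z ⟨x, ⟨hx0, hx1⟩, rfl⟩
    exact key x hx0 hx1
  -- gX y ≤ gV y on the set
  have hgXle : ∀ y : Fin d → ℝ, (∀ j, 0 ≤ y j) → (⨅ j, y j) = 1 → gX y ≤ gV y := by
    intro y hy0 hy1
    rw [hgX y hy0]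
    have hmem : (0:ℝ) ∈ Set.Icc (0:ℝ) ((⨅ j, y j) / γ) :=
      ⟨le_refl 0, by rw [hy1]; positivity⟩
    have : gV y = 0 + gV (fun j => y j - γ * 0) := by
      simp
    rw [this]
    exact csInf_le ⟨M, inner_lb y hy0 hy1⟩ ⟨0, hmem, rfl⟩
  -- mX ≤ mV
  have hmXleV : mX ≤ mV := by
    rw [hmV]
    refine le_csInf hSVne ?_
    rintro z ⟨y, ⟨hy0, hy1⟩, rfl⟩
    calc mX ≤ gX y := hmX ▸ csInf_le hSXbdd ⟨y, ⟨hy0, hy1⟩, rfl⟩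
    _ ≤ gV y := hgXle y hy0 hy1
  -- mX ≤ 1/γ using x = 𝟙 at s = 1/γ
  have hgXone : gX (fun _ : Fin d => (1:ℝ)) ≤ 1/γ := by
    rw [hgX _ (fun _ => zero_le_one)]
    have hmem : (1/γ) ∈ Set.Icc (0:ℝ) ((⨅ _j : Fin d, (1:ℝ)) / γ) := by
      rw [ciInf_const]
      exact ⟨by positivity, le_refl _⟩
    have hval : (1/γ) + gV (fun _j : Fin d => 1 - γ * (1/γ)) = 1/γ := by
      have : (fun _j : Fin d => 1 - γ * (1/γ)) = (0 : Fin d → ℝ) := by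
        funext j
        field_simp
        simp
      rw [this, hgV0, add_zero]
    calc sInf ((fun s => s + gV (fun _j : Fin d => 1 - γ * s)) ''
          Set.Icc (0:ℝ) ((⨅ _j : Fin d, (1:ℝ)) / γ))
        ≤ (1/γ) + gV (fun _j : Fin d => 1 - γ * (1/γ)) :=
          csInf_le ⟨M, inner_lb _ (fun _ => zero_le_one) ciInf_const⟩ ⟨1/γ, hmem, rfl⟩
    _ = 1/γ := hval
  have hmXleγ : mX ≤ 1/γ := by
    calc mX ≤ gX (fun _ : Fin d => (1:ℝ)) := hmX ▸ csInf_le hSXbdd ⟨_, hone, rfl⟩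
    _ ≤ 1/γ := hgXone
  have hmXM : mX = M := le_antisymm (le_min hmXleV hmXleγ) hmXgeM
  have h1 : γ < 1 / mV → mX = mV := by
    intro h
    have hγmV : γ * mV < 1 := (lt_div_iff₀ hmVpos).1 h
    have : mV < 1/γ := (lt_div_iff₀ hγ0).2 (by linarith [hγmV])
    rw [hmXM, hM, min_eq_left this.le]
  have h2 : 1 / mV ≤ γ → mX = 1 / γ := by
    intro h
    have hγmV : 1 ≤ γ * mV := by
      have := (div_le_iff₀ hmVpos).1 h
      linarith
    have : 1/γ ≤ mV := (div_le_iff₀ hγ0).2 (by linarith)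
    rw [hmXM, hM, min_eq_right this]
  refine ⟨⟨h1, h2⟩, fun h => by rw [h1 h], fun h => by rw [h2 h, one_div, inv_inv]⟩
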